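/- Let n, k ∈ ℕ and let M_0 ⊊ M_1 ⊊ ⋯ ⊊ M_k be a strictly increasing chain of ℤ-submodules of ℤ^n, all having the same rank r with 1 ≤ r ≤ n. Assume that M_0 is generated by a finite collection of vectors all of whose entries have absolute value at most B, where B ≥ 1. Then k ≤ r·log₂ B + (r/2)·log₂ r. -/

import Mathlib

open Module

lemma hadamard_real {r : ℕ} (A : Matrix (Fin r) (Fin r) ℝ) :
    |A.det| ≤ ∏ i, Real.sqrt (∑ j, (A i j)^2) := by
  classical
  let f : Fin r → EuclideanSpace ℝ (Fin r) := fun i => (WithLp.equiv 2 (Fin r → ℝ)).symm (A i)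
  have h : finrank ℝ (EuclideanSpace ℝ (Fin r)) = Fintype.card (Fin r) := by
    simp [finrank_euclideanSpace]
  haveI : WellFoundedLT (Fin r) := inferInstance
  let gs : OrthonormalBasis (Fin r) ℝ (EuclideanSpace ℝ (Fin r)) :=
    InnerProductSpace.gramSchmidtOrthonormalBasis (𝕜 := ℝ) h f
  let std := (EuclideanSpace.basisFun (Fin r) ℝ).toBasis
  have h1 : std.toMatrix f = Matrix.transpose A := by
    ext i j
    simp [std, Basis.toMatrix_apply, EuclideanSpace.basisFun_repr, f, Matrix.transpose_apply]
  have h2 : std.toMatrix (⇑gs.toBasis) * gs.toBasis.toMatrix f = std.toMatrix f :=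
    Basis.toMatrix_mul_toMatrix _ _ _
  have h3 : |(std.toMatrix (⇑gs.toBasis)).det| = 1 := by
    rw [← Basis.det_apply, show ⇑gs.toBasis = ⇑gs from OrthonormalBasis.coe_toBasis gs]
    rcases OrthonormalBasis.det_to_matrix_orthonormalBasis_real (EuclideanSpace.basisFun (Fin r) ℝ) gs with h | h
    · rw [h]; simp
    · rw [h]; simp
  have hnorm : ∀ i, ‖f i‖ = Real.sqrt (∑ j, (A i j)^2) := by
    intro i
    rw [EuclideanSpace.norm_eq]
    congr 1
    refine Finset.sum_congr rfl fun j _ => ?_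
    rw [Real.norm_eq_abs, sq_abs]
    rfl
  have h4 : |(gs.toBasis.toMatrix f).det| ≤ ∏ i, Real.sqrt (∑ j, (A i j)^2) := by
    rw [← Basis.det_apply, InnerProductSpace.gramSchmidtOrthonormalBasis_det (𝕜 := ℝ) h f]
    calc |∏ i, (inner ℝ (gs i) (f i) : ℝ)| = ∏ i, |(inner ℝ (gs i) (f i) : ℝ)| := by
            rw [Finset.abs_prod]
      _ ≤ ∏ i, Real.sqrt (∑ j, (A i j)^2) := by
            apply Finset.prod_le_prod (fun i _ => abs_nonneg _)
            intro i _
            have hle := abs_real_inner_le_norm (gs i) (f i)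
            have hgs : ‖gs i‖ = 1 := gs.orthonormal.1 i
            rw [hgs, one_mul] at hle
            rw [← hnorm i]
            exact hle
  have hdet : |A.det| = |(std.toMatrix f).det| := by rw [h1, Matrix.det_transpose]
  rw [hdet, ← h2, Matrix.det_mul, abs_mul, h3, one_mul]
  exact h4

open Module Submodule

noncomputable def cmap (n : ℕ) : (Fin n → ℤ) →ₗ[ℤ] (Fin n → ℚ) :=
  LinearMap.pi fun j => (Int.castAddHom ℚ).toIntLinearMap.comp (LinearMap.proj j)

lemma cmap_apply (n : ℕ) (x : Fin n → ℤ) (j : Fin n) : cmap n x j = (x j : ℚ) := rfl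

lemma cmap_inj (n : ℕ) : Function.Injective (cmap n) := by
  intro x y h
  funext j
  have h2 : cmap n x j = cmap n y j := congrFun h j
  rw [cmap_apply, cmap_apply] at h2
  exact_mod_cast h2

lemma span_image_span (n : ℕ) (s : Set (Fin n → ℤ)) :
    span ℚ (cmap n '' (span ℤ s : Set (Fin n → ℤ))) = span ℚ (cmap n '' s) := by
  rw [show cmap n '' (span ℤ s : Set (Fin n → ℤ)) = ((span ℤ s).map (cmap n) : Set (Fin n → ℚ))
      from rfl,
    Submodule.map_span, span_span_of_tower]

lemma li_q_of_li_z {n : ℕ} {ι : Type*} {v : ι → (Fin n → ℚ)} (h : LinearIndependent ℤ v) :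
    LinearIndependent ℚ v := (LinearIndependent.iff_fractionRing ℤ ℚ).mp h

lemma finrank_qspan (n : ℕ) (P : Submodule ℤ (Fin n → ℤ)) :
    finrank ℚ (span ℚ (cmap n '' (P : Set (Fin n → ℤ)))) = finrank ℤ P := by
  classical
  let b := Module.finBasis ℤ ↥P
  let v : Fin (finrank ℤ ↥P) → (Fin n → ℤ) := fun i => (b i : Fin n → ℤ)
  have hP : P = span ℤ (Set.range v) := by
    conv_lhs => rw [← Submodule.map_subtype_top P]
    rw [← b.span_eq, Submodule.map_span]
    congr 1
    rw [← Set.range_comp]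
    rfl
  have hli : LinearIndependent ℚ (cmap n ∘ v) := by
    apply li_q_of_li_z
    have h1 : LinearIndependent ℤ v := b.linearIndependent.map' P.subtype (ker_subtype P)
    exact h1.map' (cmap n) (LinearMap.ker_eq_bot.mpr (cmap_inj n))
  have : span ℚ (cmap n '' (P : Set (Fin n → ℤ))) = span ℚ (Set.range (cmap n ∘ v)) := by
    conv_lhs => rw [hP]
    rw [span_image_span, Set.range_comp]
  rw [this, finrank_span_eq_card hli, Fintype.card_fin]

open Module

lemma coe_basis_sum {Mo : Type*} [AddCommGroup Mo] [Module ℤ Mo] {N : Submodule ℤ Mo}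
    {κ : Type*} [Fintype κ] (bN' : Basis κ ℤ N) (x : N) :
    (x : Mo) = ∑ l, bN'.repr x l • (bN' l : Mo) := by
  conv_lhs => rw [← bN'.sum_repr x]
  push_cast
  rfl

lemma toMatrix_basis_change {ιM κ : Type*} [Fintype ιM] [DecidableEq ιM] [Fintype κ]
    [DecidableEq κ] {Mo : Type*} [AddCommGroup Mo] [Module ℤ Mo] (bM : Basis ιM ℤ Mo)
    {N : Submodule ℤ Mo} (bN bN' : Basis κ ℤ N) :
    bM.toMatrix (fun j => (bN j : Mo)) =
      bM.toMatrix (fun j => (bN' j : Mo)) * bN'.toMatrix ⇑bN := by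
  ext i j
  rw [Matrix.mul_apply, Basis.toMatrix_apply, coe_basis_sum bN' (bN j), map_sum]
  simp [Basis.toMatrix_apply, mul_comm]

lemma index_eq_natAbs_det {r : ℕ} (N : Submodule ℤ (Fin r → ℤ)) (bN : Basis (Fin r) ℤ N) :
    N.toAddSubgroup.index =
      ((Pi.basisFun ℤ (Fin r)).toMatrix (fun i => (bN i : Fin r → ℤ))).det.natAbs := by
  classical
  obtain ⟨m, snf⟩ := N.smithNormalForm (Pi.basisFun ℤ (Fin r))
  have hm : m = r := by simpa using (Fintype.card_congr (snf.bN.indexEquiv bN))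
  subst hm
  have hfb : Function.Bijective snf.f :=
    (Fintype.bijective_iff_injective_and_card snf.f).2 ⟨snf.f.injective, rfl⟩
  let fe := Equiv.ofBijective snf.f hfb
  have hidx : N.toAddSubgroup.index = ∏ i, (snf.a i).natAbs := by
    rw [snf.toAddSubgroup_index_eq_pow_mul_prod]
    simp [Ideal.span_singleton_toAddSubgroup_eq_zmultiples, Int.index_zmultiples]
  let b0 := Pi.basisFun ℤ (Fin m)
  let bNr := snf.bN.reindex fe
  have hu : ∀ i, ((bNr i : Fin m → ℤ)) = snf.a (fe.symm i) • (snf.bM i) := by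
    intro i
    rw [Basis.reindex_apply, snf.snf]
    have h := fe.apply_symm_apply i
    show snf.a (fe.symm i) • snf.bM (fe (fe.symm i)) = _
    rw [h]
  have hdiag : snf.bM.toMatrix (fun i => (bNr i : Fin m → ℤ)) =
      Matrix.diagonal (fun i => snf.a (fe.symm i)) := by
    ext i j
    rw [Basis.toMatrix_apply, hu j, map_smul]
    by_cases h : i = j
    · subst h; simp
    · simp [Matrix.diagonal_apply_ne _ (by exact h), Finsupp.single_apply, Ne.symm h]
  have h1 : b0.toMatrix (fun i => (bN i : Fin m → ℤ)) =
      b0.toMatrix ⇑snf.bM * snf.bM.toMatrix (fun i => (bN i : Fin m → ℤ)) :=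
    (Basis.toMatrix_mul_toMatrix _ _ _).symm
  have h2 : snf.bM.toMatrix (fun i => (bN i : Fin m → ℤ)) =
      Matrix.diagonal (fun i => snf.a (fe.symm i)) * bNr.toMatrix ⇑bN := by
    rw [← hdiag]; exact toMatrix_basis_change snf.bM bN bNr
  have hU1 : (b0.toMatrix ⇑snf.bM).det.natAbs = 1 := by
    have := b0.isUnit_det snf.bM
    rw [Basis.det_apply] at this
    exact Int.isUnit_iff.mp this |>.elim (fun h => by rw [h]; rfl) (fun h => by rw [h]; rfl)
  have hU2 : (bNr.toMatrix ⇑bN).det.natAbs = 1 := by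
    have := bNr.isUnit_det bN
    rw [Basis.det_apply] at this
    exact Int.isUnit_iff.mp this |>.elim (fun h => by rw [h]; rfl) (fun h => by rw [h]; rfl)
  rw [h1, h2, Matrix.det_mul, Matrix.det_mul, Int.natAbs_mul, Int.natAbs_mul, hU1, hU2,
    one_mul, mul_one, Matrix.det_diagonal, hidx]
  rw [show (∏ i : Fin m, snf.a (fe.symm i)).natAbs = ∏ i : Fin m, (snf.a (fe.symm i)).natAbs
    from map_prod Int.natAbsHom _ _]
  exact (Equiv.prod_comp fe.symm (fun i => (snf.a i).natAbs)).symm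

lemma index_span_rows {r : ℕ} (W : Matrix (Fin r) (Fin r) ℤ)
    (hW : LinearIndependent ℤ (fun i => W i)) :
    (Submodule.span ℤ (Set.range fun i => W i)).toAddSubgroup.index = W.det.natAbs := by
  classical
  let bN := Basis.span hW
  rw [index_eq_natAbs_det _ bN]
  have : ((Pi.basisFun ℤ (Fin r)).toMatrix (fun i => (bN i : Fin r → ℤ))) = W.transpose := by
    ext i j
    rw [Basis.toMatrix_apply, Basis.span_apply]
    simp [Matrix.transpose_apply]
  rw [this, Matrix.det_transpose]

open Module Submodule

/-- Let `M 0 ⊊ M 1 ⊊ ⋯ ⊊ M k` be a strictly increasing chain of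
`ℤ`-submodules of `ℤ^n`, all of the same rank `r` with `1 ≤ r ≤ n`.  If `M 0` is generated
by a finite collection of vectors whose entries have absolute value at most `B ≥ 1`, then
`k ≤ r·log₂ B + (r/2)·log₂ r`. -/
theorem chain_length_le_of_bounded_generators
    (n k r : ℕ) (B : ℤ) (hB : 1 ≤ B) (hr1 : 1 ≤ r) (hrn : r ≤ n)
    (M : ℕ → Submodule ℤ (Fin n → ℤ))
    (hchain : ∀ i < k, M i < M (i + 1))
    (hrank : ∀ i ≤ k, Module.finrank ℤ (M i) = r)
    (S : Finset (Fin n → ℤ))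
    (hgen : M 0 = Submodule.span ℤ (S : Set (Fin n → ℤ)))
    (hbound : ∀ v ∈ S, ∀ j, |v j| ≤ B) :
    (k : ℝ) ≤ (r : ℝ) * Real.logb 2 (B : ℝ) + ((r : ℝ) / 2) * Real.logb 2 (r : ℝ) := by
  classical
  set c := cmap n with hc
  -- monotonicity of the chain
  have hmono : ∀ i j, i ≤ j → j ≤ k → M i ≤ M j := by
    intro i j hij hjk
    induction j with
    | zero => simp_all
    | succ j ih =>
      rcases Nat.eq_or_lt_of_le hij with h | h
      · exact h ▸ le_rfl
      · exact (ih (Nat.lt_succ_iff.mp h) (le_of_lt (Nat.lt_of_succ_le hjk))).trans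
          (hchain j (Nat.lt_of_succ_le hjk)).le
  -- the common rational span
  set V : Submodule ℚ (Fin n → ℚ) := span ℚ (⇑c '' (S : Set (Fin n → ℤ))) with hV
  have hVM0 : V = span ℚ (⇑c '' ((M 0) : Set (Fin n → ℤ))) := by
    rw [hV, hgen, span_image_span]
  have hVfin : finrank ℚ ↥V = r := by
    rw [hVM0, finrank_qspan, hrank 0 (Nat.zero_le k)]
  have hVi : ∀ i ≤ k, ∀ x ∈ M i, c x ∈ V := by
    intro i hik x hx
    have hle : V ≤ span ℚ (⇑c '' ((M i) : Set (Fin n → ℤ))) := by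
      rw [hVM0]
      exact span_mono (Set.image_mono (hmono 0 i (Nat.zero_le i) hik))
    have heq : V = span ℚ (⇑c '' ((M i) : Set (Fin n → ℤ))) := by
      apply Submodule.eq_of_le_of_finrank_eq hle
      rw [hVfin, finrank_qspan, hrank i hik]
    rw [heq]
    exact subset_span (Set.mem_image_of_mem _ hx)
  -- choose r elements of S with ℚ-linearly independent images
  obtain ⟨v, hvS, hvli⟩ :
      ∃ v : Fin r → (Fin n → ℤ), (∀ s, v s ∈ S) ∧ LinearIndependent ℚ (⇑c ∘ v) := by
    obtain ⟨bset, hbsub, hbspan, hbli⟩ := exists_linearIndependent ℚ (⇑c '' (S : Set (Fin n → ℤ)))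
    have hbfin : bset.Finite := by
      have : FiniteDimensional ℚ (Fin n → ℚ) := inferInstance
      exact Set.Finite.subset (S.finite_toSet.image _) hbsub
    haveI := hbfin.fintype
    have hcard : Fintype.card bset = r := by
      have h1 : finrank ℚ (span ℚ bset) = r := by rw [hbspan, ← hV, hVfin]
      rw [finrank_span_set_eq_card hbli] at h1
      rwa [Set.toFinset_card] at h1
    let e : Fin r ≃ bset := (Fintype.equivFinOfCardEq hcard).symm
    have hch : ∀ s : Fin r, ∃ x, x ∈ S ∧ c x = (e s : Fin n → ℚ) := by
      intro s
      rcases hbsub (e s).2 with ⟨x, hx1, hx2⟩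
      exact ⟨x, hx1, hx2⟩
    choose v hv1 hv2 using hch
    refine ⟨v, hv1, ?_⟩
    have : ⇑c ∘ v = Subtype.val ∘ e := by
      funext s; simp [Function.comp, hv2]
    rw [this]
    exact hbli.comp e e.injective
  -- the rational matrix of the chosen vectors
  set Aq : Matrix (Fin r) (Fin n) ℚ := Matrix.of fun s j => ((v s j : ℚ)) with hAq
  have hAqrows : ∀ s, Aq s = c (v s) := fun s => rfl
  have hrowsli : LinearIndependent ℚ (fun s => Aq s) := by
    have : (fun s => Aq s) = ⇑c ∘ v := by funext s; exact hAqrows s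
    rw [this]; exact hvli
  -- column rank is r : choose r independent columns
  obtain ⟨t, hQunit⟩ : ∃ t : Fin r → Fin n, IsUnit (Aq.submatrix id t) := by
    have hrk : finrank ℚ (span ℚ (Set.range Aq.transpose)) = r := by
      have h1 := Matrix.rank_eq_finrank_span_cols Aq
      have h2 := Matrix.rank_transpose Aq
      have h3 := Matrix.rank_eq_finrank_span_cols Aq.transpose
      change _ = finrank ℚ (span ℚ (Set.range Aq)) at h3
      change _ = finrank ℚ (span ℚ (Set.range Aq.transpose)) at h1
      have h4 : finrank ℚ (span ℚ (Set.range Aq)) = r := by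
        rw [finrank_span_eq_card hrowsli, Fintype.card_fin]
      omega
    obtain ⟨bc, hbcsub, hbcspan, hbcli⟩ :=
      exists_linearIndependent ℚ (Set.range Aq.transpose)
    have hbcfin : bc.Finite :=
      Set.Finite.subset (Set.finite_range _) hbcsub
    haveI := hbcfin.fintype
    have hcard : Fintype.card bc = r := by
      have h1 : finrank ℚ (span ℚ bc) = r := by rw [hbcspan, hrk]
      rw [finrank_span_set_eq_card hbcli] at h1
      rwa [Set.toFinset_card] at h1
    let e : Fin r ≃ bc := (Fintype.equivFinOfCardEq hcard).symm
    have hch : ∀ s : Fin r, ∃ j, Aq.transpose j = (e s : Fin r → ℚ) := fun s => hbcsub (e s).2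
    choose t ht using hch
    refine ⟨t, ?_⟩
    rw [← Matrix.linearIndependent_cols_iff_isUnit]
    have : (fun s => (Aq.submatrix id t).transpose s) = Subtype.val ∘ e := by
      funext s
      have : (Aq.submatrix id t).transpose s = Aq.transpose (t s) := by
        funext s'; rfl
      rw [this, ht]
      rfl
    show LinearIndependent ℚ (fun s => (Aq.submatrix id t).transpose s)
    rw [this]
    exact hbcli.comp e e.injective
  set Q : Matrix (Fin r) (Fin r) ℚ := Aq.submatrix id t with hQ
  have hQrowsli : LinearIndependent ℚ (fun s => Q s) :=
    Matrix.linearIndependent_rows_iff_isUnit.mpr hQunit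
  -- the projection
  set π : (Fin n → ℤ) →ₗ[ℤ] (Fin r → ℤ) :=
    LinearMap.pi (fun s => LinearMap.proj (t s)) with hπ
  have hπapp : ∀ x s, π x s = x (t s) := fun x s => rfl
  -- injectivity of π on vectors with image in V
  have hπinj : ∀ x : Fin n → ℤ, c x ∈ V → π x = 0 → x = 0 := by
    intro x hxV hπx
    have hVv : V = span ℚ (Set.range (⇑c ∘ v)) := by
      apply (Submodule.eq_of_le_of_finrank_eq ?_ ?_).symm
      · rw [hV]
        apply span_le.mpr
        rintro - ⟨s, rfl⟩
        exact subset_span (Set.mem_image_of_mem _ (hvS s))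
      · rw [finrank_span_eq_card hvli, Fintype.card_fin, hVfin]
    rw [hVv] at hxV
    obtain ⟨y, hy⟩ := (mem_span_range_iff_exists_fun ℚ).mp hxV
    have hyQ : Matrix.vecMul y Q = 0 := by
      funext s'
      have h1 : (∑ s, y s • (⇑c ∘ v) s) (t s') = (c x) (t s') := by rw [hy]
      have h2 : (c x) (t s') = ((x (t s') : ℚ)) := rfl
      have h3 : x (t s') = 0 := by
        have := congrFun hπx s'
        rwa [hπapp] at this
      simp only [Finset.sum_apply, Pi.smul_apply, Function.comp_apply] at h1
      rw [h2, h3] at h1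
      push_cast at h1
      show Matrix.vecMul y Q s' = (0 : Fin r → ℚ) s'
      rw [Pi.zero_apply, Matrix.vecMul, dotProduct, ← h1]
      apply Finset.sum_congr rfl
      intro s _
      rfl
    have hy0 : y = 0 := by
      have hinj := Matrix.vecMul_injective_iff.mpr hQrowsli
      apply hinj
      show Matrix.vecMul y Q = Matrix.vecMul 0 Q
      rw [hyQ, Matrix.zero_vecMul]
    have : c x = 0 := by rw [← hy, hy0]; simp
    exact cmap_inj n (by rw [this, map_zero])
  -- the integer matrix W
  set W : Matrix (Fin r) (Fin r) ℤ := Matrix.of fun s s' => v s (t s') with hW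
  have hWQ : Q = W.map (Int.castRingHom ℚ) := by
    ext s s'; rfl
  have hWli : LinearIndependent ℤ (fun s => W s) := by
    have h1 : LinearIndependent ℤ (fun s => Q s) := by
      apply hQrowsli.restrict_scalars
      intro a b hab
      simpa [zsmul_eq_mul] using hab
    set cr := cmap r with hcr
    have h2 : (fun s => Q s) = ⇑cr ∘ (fun s => W s) := by
      funext s; funext s'; rfl
    rw [h2] at h1
    exact h1.of_comp cr
  have hWdet : W.det ≠ 0 := by
    intro h0
    have : Q.det = 0 := by
      have hh := (Int.castRingHom ℚ).map_det W
      rw [h0, map_zero] at hh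
      rw [hWQ]
      exact hh.symm ▸ rfl
    exact (((Matrix.isUnit_iff_isUnit_det Q).mp hQunit).ne_zero) this
  -- the subgroup chain
  set H : ℕ → AddSubgroup (Fin r → ℤ) := fun i => ((M i).map π).toAddSubgroup with hH
  have hHmono : ∀ i j, i ≤ j → j ≤ k → H i ≤ H j := by
    intro i j hij hjk x hx
    exact Submodule.map_mono (hmono i j hij hjk) hx
  have hπMV : ∀ i ≤ k, ∀ x ∈ M i, c x ∈ V := hVi
  have hstrict : ∀ i < k, ¬ (H (i+1) ≤ H i) := by
    intro i hik hle
    have : M (i+1) ≤ M i := by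
      intro x hx
      have hxH : π x ∈ H (i+1) := Submodule.mem_map_of_mem hx
      have := hle hxH
      rw [hH] at this
      simp only [Submodule.mem_toAddSubgroup] at this
      obtain ⟨y, hyMi, hyx⟩ := this
      have hyM1 : y ∈ M (i+1) := (hchain i hik).le hyMi
      have hsub : x - y ∈ M (i+1) := sub_mem hx hyM1
      have hcV : c (x - y) ∈ V := hVi (i+1) hik _ hsub
      have hπ0 : π (x - y) = 0 := by rw [map_sub, hyx, sub_self]
      have := hπinj (x - y) hcV hπ0
      have hxy : x = y := by
        have := sub_eq_zero.mp this
        exact this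
      rw [hxy]; exact hyMi
    exact (lt_iff_le_not_ge.mp (hchain i hik)).2 this
  -- the bottom lattice
  have hWsub : span ℤ (Set.range fun s => W s) ≤ (M 0).map π := by
    apply span_le.mpr
    rintro - ⟨s, rfl⟩
    refine ⟨v s, ?_, ?_⟩
    · rw [hgen]; exact subset_span (hvS s)
    · funext s'; rfl
  have hidxW : (span ℤ (Set.range fun s => W s)).toAddSubgroup.index = W.det.natAbs :=
    index_span_rows W hWli
  have hH0dvd : (H 0).index ∣ W.det.natAbs := by
    rw [← hidxW]
    apply AddSubgroup.index_dvd_of_le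
    intro x hx
    exact hWsub hx
  have hH0ne : (H 0).index ≠ 0 := by
    intro h0
    rw [h0] at hH0dvd
    exact Int.natAbs_ne_zero.mpr hWdet (Nat.eq_zero_of_zero_dvd hH0dvd)
  -- relindex chain
  have hrelne : ∀ i ≤ k, (H 0).relIndex (H i) ≠ 0 := by
    intro i hik
    have h1 := AddSubgroup.relIndex_mul_index (hHmono 0 i (Nat.zero_le i) hik)
    intro h0
    rw [h0, zero_mul] at h1
    exact hH0ne h1.symm
  have hrel : ∀ i ≤ k, 2^i ≤ (H 0).relIndex (H i) := by
    intro i hik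
    induction i with
    | zero => simp [AddSubgroup.relIndex_self]
    | succ i ih =>
      have hik' : i ≤ k := Nat.le_of_succ_le hik
      have h1 := AddSubgroup.relIndex_mul_relIndex (H 0) (H i) (H (i+1))
        (hHmono 0 i (Nat.zero_le i) hik') (hHmono i (i+1) (Nat.le_succ i) hik)
      have h2 : (H i).relIndex (H (i+1)) ≠ 0 := by
        intro h0
        rw [h0, mul_zero] at h1
        exact hrelne (i+1) hik h1.symm
      have h3 : (H i).relIndex (H (i+1)) ≠ 1 := by
        intro h0
        exact hstrict i (Nat.lt_of_succ_le hik) (AddSubgroup.relIndex_eq_one.mp h0)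
      have h4 : 2 ≤ (H i).relIndex (H (i+1)) := by omega
      calc 2^(i+1) = 2^i * 2 := by ring
        _ ≤ (H 0).relIndex (H i) * (H i).relIndex (H (i+1)) :=
            Nat.mul_le_mul (ih hik') h4
        _ = (H 0).relIndex (H (i+1)) := h1
  have hkey : 2^k ≤ W.det.natAbs := by
    have h1 := AddSubgroup.relIndex_mul_index (hHmono 0 k (Nat.zero_le k) le_rfl)
    have h2 : (H k).index ≠ 0 := by
      intro h0
      rw [h0, mul_zero] at h1
      exact hH0ne h1.symm
    have h3 : (H 0).relIndex (H k) ≤ (H 0).index := by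
      rw [← h1]
      exact Nat.le_mul_of_pos_right _ (Nat.pos_of_ne_zero h2)
    have h4 : (H 0).index ≤ W.det.natAbs :=
      Nat.le_of_dvd (Nat.pos_of_ne_zero (Int.natAbs_ne_zero.mpr hWdet)) hH0dvd
    exact le_trans (le_trans (hrel k le_rfl) h3) h4
  -- Hadamard bound
  have hBpos : (0:ℝ) < (B:ℝ) := by exact_mod_cast lt_of_lt_of_le zero_lt_one hB
  have hrpos : (0:ℝ) < (r:ℝ) := by exact_mod_cast hr1
  have hHad : |((W.det : ℤ) : ℝ)| ≤ ((B:ℝ) * Real.sqrt r)^r := by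
    have h1 : ((W.det : ℤ) : ℝ) = (W.map (Int.castRingHom ℝ)).det :=
      (Int.castRingHom ℝ).map_det W
    rw [h1]
    refine (hadamard_real (W.map (Int.castRingHom ℝ))).trans ?_
    rw [show ((B:ℝ) * Real.sqrt r)^r = ∏ _i : Fin r, ((B:ℝ) * Real.sqrt r) by
      rw [Finset.prod_const, Finset.card_univ, Fintype.card_fin]]
    apply Finset.prod_le_prod (fun i _ => Real.sqrt_nonneg _)
    intro i _
    have hsum : ∑ j, ((W.map (Int.castRingHom ℝ)) i j)^2 ≤ (r:ℝ) * (B:ℝ)^2 := by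
      calc ∑ j, ((W.map (Int.castRingHom ℝ)) i j)^2 ≤ ∑ _j : Fin r, (B:ℝ)^2 := by
            apply Finset.sum_le_sum
            intro j _
            have : |((W i j : ℤ) : ℝ)| ≤ (B:ℝ) := by
              have h2 : |W i j| ≤ B := hbound (v i) (hvS i) (t j)
              exact_mod_cast h2
            calc ((W.map (Int.castRingHom ℝ)) i j)^2 = |((W i j : ℤ) : ℝ)|^2 := by
                  rw [sq_abs]; rfl
              _ ≤ (B:ℝ)^2 := by
                  apply pow_le_pow_left₀ (abs_nonneg _) this
        _ = (r:ℝ) * (B:ℝ)^2 := by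
            simp [Finset.sum_const, Finset.card_univ]
    refine (Real.sqrt_le_sqrt hsum).trans (le_of_eq ?_)
    rw [Real.sqrt_mul (le_of_lt hrpos), Real.sqrt_sq (le_of_lt hBpos), mul_comm]
  -- numerics
  have hfinal : (2:ℝ)^k ≤ ((B:ℝ) * Real.sqrt r)^r := by
    calc (2:ℝ)^k ≤ (W.det.natAbs : ℝ) := by exact_mod_cast hkey
      _ = |((W.det : ℤ) : ℝ)| := by rw [Nat.cast_natAbs]; push_cast; ring_nf
      _ ≤ ((B:ℝ) * Real.sqrt r)^r := hHad
  have hsr : (0:ℝ) < Real.sqrt r := Real.sqrt_pos.mpr hrpos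
  have hCpos : (0:ℝ) < ((B:ℝ) * Real.sqrt r)^r := pow_pos (mul_pos hBpos hsr) r
  have hlogk : (k:ℝ) = Real.logb 2 ((2:ℝ)^k) := by
    rw [Real.logb_pow]
    rw [show Real.logb 2 2 = 1 from Real.logb_self_eq_one (by norm_num)]
    ring
  have hmonolog := (Real.logb_le_logb (by norm_num : (1:ℝ) < 2)
    (pow_pos (by norm_num : (0:ℝ) < 2) k) hCpos).mpr hfinal
  rw [← hlogk] at hmonolog
  refine hmonolog.trans (le_of_eq ?_)
  rw [mul_pow, Real.logb_mul (by positivity) (by positivity), Real.logb_pow, Real.logb_pow]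
  have hsqrt : Real.logb 2 (Real.sqrt r) = (1/2) * Real.logb 2 (r:ℝ) := by
    rw [Real.sqrt_eq_rpow, Real.logb, Real.log_rpow hrpos, Real.logb]
    ring
  rw [hsqrt]
  ring
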